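/- arXiv:1809.09934 — 5 statements merged into one kernel-verified Lean document; each statement's English description precedes it below -/
import Mathlib

section
/- The monomial ideal S_d generated by { M_i M_j : 2 ≤ i ≤ j ≤ d-2 } ∪ { M_1 M_i M_{d-1} : 2 ≤ i ≤ d-2 } ∪ { M_1^2 M_{d-1}^2 } in k[M_1,...,M_d] equals the intersection of the two monomial ideals ⟨ M_i M_j : 1 ≤ i ≤ j ≤ d-2 ⟩ and ⟨ M_i M_j : 2 ≤ i ≤ j ≤ d-1 ⟩. -/
open MvPolynomial

/-- the monomial ideal `S_d` equals the intersection
`⟨M_i M_j : 1 ≤ i ≤ j ≤ d−2⟩ ⊓ ⟨M_i M_j : 2 ≤ i ≤ j ≤ d−1⟩`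
in `k[M_1,…,M_d]` (realized inside `k[M_0,M_1,…,M_d]`, variable `M_0` unused). -/
theorem stmt4 (k : Type*) [Field k] (d : ℕ) (hd : 6 ≤ d)
    (M : ℕ → MvPolynomial (Fin (d + 1)) k)
    (hM : ∀ (i : ℕ) (hi : i ≤ d), M i = MvPolynomial.X (⟨i, by omega⟩ : Fin (d + 1))) :
    Ideal.span ({p | ∃ i j : ℕ, 2 ≤ i ∧ i ≤ j ∧ j ≤ d - 2 ∧ p = M i * M j}
        ∪ {p | ∃ i : ℕ, 2 ≤ i ∧ i ≤ d - 2 ∧ p = M 1 * M i * M (d - 1)}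
        ∪ {M 1 ^ 2 * M (d - 1) ^ 2})
      = Ideal.span {p | ∃ i j : ℕ, 1 ≤ i ∧ i ≤ j ∧ j ≤ d - 2 ∧ p = M i * M j}
        ⊓ Ideal.span {p | ∃ i j : ℕ, 2 ≤ i ∧ i ≤ j ∧ j ≤ d - 1 ∧ p = M i * M j} := by
  classical
  -- the embedding ℕ → Fin (d+1)
  have hlt : ∀ i : ℕ, min i d < d + 1 := fun i => by omega
  set fn : ℕ → Fin (d + 1) := fun i => ⟨min i d, hlt i⟩ with hfn
  have hfnv : ∀ i : ℕ, i ≤ d → ((fn i : Fin (d+1)) : ℕ) = i := by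
    intro i hi; simp [hfn, Nat.min_eq_left hi]
  have hfne : ∀ i j : ℕ, i ≤ d → j ≤ d → i ≠ j → fn i ≠ fn j := by
    intro i j hi hj hij h
    apply hij
    have := congrArg (Fin.val) h
    rw [hfnv i hi, hfnv j hj] at this
    exact this
  have hfinj : ∀ i j : ℕ, i ≤ d → j ≤ d → fn i = fn j → i = j := by
    intro i j hi hj h
    have := congrArg (Fin.val) h
    rw [hfnv i hi, hfnv j hj] at this
    exact this
  have hMX : ∀ i : ℕ, (hi : i ≤ d) → M i = X (fn i) := by
    intro i hi
    rw [hM i hi]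
    congr 1
    exact Fin.ext (by simp [hfn, Nat.min_eq_left hi])
  -- products as monomials
  have key : ∀ i j : ℕ, i ≤ d → j ≤ d →
      M i * M j = monomial (Finsupp.single (fn i) 1 + Finsupp.single (fn j) 1) (1 : k) := by
    intro i j hi hj
    rw [hMX i hi, hMX j hj, ← pow_one (X (fn i)), ← pow_one (X (fn j)),
      X_pow_eq_monomial, X_pow_eq_monomial, monomial_mul, one_mul]
  have keytri : ∀ i : ℕ, i ≤ d →
      M 1 * M i * M (d - 1) = monomial (Finsupp.single (fn 1) 1 + Finsupp.single (fn i) 1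
        + Finsupp.single (fn (d - 1)) 1) (1 : k) := by
    intro i hi
    rw [key 1 i (by omega) hi, hMX (d-1) (by omega), ← pow_one (X (fn (d-1))),
      X_pow_eq_monomial, monomial_mul, one_mul]
  have keysq : M 1 ^ 2 * M (d - 1) ^ 2
      = monomial (Finsupp.single (fn 1) 2 + Finsupp.single (fn (d - 1)) 2) (1 : k) := by
    rw [hMX 1 (by omega), hMX (d-1) (by omega), X_pow_eq_monomial, X_pow_eq_monomial,
      monomial_mul, one_mul]
  -- generating sets as monomial images
  have hGA : ({p | ∃ i j : ℕ, 2 ≤ i ∧ i ≤ j ∧ j ≤ d - 2 ∧ p = M i * M j}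
        ∪ {p | ∃ i : ℕ, 2 ≤ i ∧ i ≤ d - 2 ∧ p = M 1 * M i * M (d - 1)}
        ∪ {M 1 ^ 2 * M (d - 1) ^ 2})
      = (fun s => monomial s (1:k)) ''
        ({s | ∃ i j : ℕ, 2 ≤ i ∧ i ≤ j ∧ j ≤ d - 2 ∧
            s = Finsupp.single (fn i) 1 + Finsupp.single (fn j) 1}
         ∪ {s | ∃ i : ℕ, 2 ≤ i ∧ i ≤ d - 2 ∧
            s = Finsupp.single (fn 1) 1 + Finsupp.single (fn i) 1
              + Finsupp.single (fn (d-1)) 1}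
         ∪ {Finsupp.single (fn 1) 2 + Finsupp.single (fn (d-1)) 2}) := by
    ext p
    simp only [Set.mem_union, Set.mem_setOf_eq, Set.mem_singleton_iff, Set.mem_image]
    constructor
    · rintro ((⟨i, j, h1, h2, h3, rfl⟩ | ⟨i, h1, h2, rfl⟩) | rfl)
      · exact ⟨_, Or.inl (Or.inl ⟨i, j, h1, h2, h3, rfl⟩), (key i j (by omega) (by omega)).symm⟩
      · exact ⟨_, Or.inl (Or.inr ⟨i, h1, h2, rfl⟩), (keytri i (by omega)).symm⟩
      · exact ⟨_, Or.inr rfl, keysq.symm⟩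
    · rintro ⟨s, (⟨i, j, h1, h2, h3, rfl⟩ | ⟨i, h1, h2, rfl⟩) | rfl, rfl⟩
      · exact Or.inl (Or.inl ⟨i, j, h1, h2, h3, (key i j (by omega) (by omega)).symm⟩)
      · exact Or.inl (Or.inr ⟨i, h1, h2, (keytri i (by omega)).symm⟩)
      · exact Or.inr keysq.symm
  have hGB : {p | ∃ i j : ℕ, 1 ≤ i ∧ i ≤ j ∧ j ≤ d - 2 ∧ p = M i * M j}
      = (fun s => monomial s (1:k)) ''
        {s | ∃ i j : ℕ, 1 ≤ i ∧ i ≤ j ∧ j ≤ d - 2 ∧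
          s = Finsupp.single (fn i) 1 + Finsupp.single (fn j) 1} := by
    ext p
    simp only [Set.mem_setOf_eq, Set.mem_image]
    constructor
    · rintro ⟨i, j, h1, h2, h3, rfl⟩
      exact ⟨_, ⟨i, j, h1, h2, h3, rfl⟩, (key i j (by omega) (by omega)).symm⟩
    · rintro ⟨s, ⟨i, j, h1, h2, h3, rfl⟩, rfl⟩
      exact ⟨i, j, h1, h2, h3, (key i j (by omega) (by omega)).symm⟩
  have hGC : {p | ∃ i j : ℕ, 2 ≤ i ∧ i ≤ j ∧ j ≤ d - 1 ∧ p = M i * M j}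
      = (fun s => monomial s (1:k)) ''
        {s | ∃ i j : ℕ, 2 ≤ i ∧ i ≤ j ∧ j ≤ d - 1 ∧
          s = Finsupp.single (fn i) 1 + Finsupp.single (fn j) 1} := by
    ext p
    simp only [Set.mem_setOf_eq, Set.mem_image]
    constructor
    · rintro ⟨i, j, h1, h2, h3, rfl⟩
      exact ⟨_, ⟨i, j, h1, h2, h3, rfl⟩, (key i j (by omega) (by omega)).symm⟩
    · rintro ⟨s, ⟨i, j, h1, h2, h3, rfl⟩, rfl⟩
      exact ⟨i, j, h1, h2, h3, (key i j (by omega) (by omega)).symm⟩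
  -- pointwise lemmas about Finsupp ≤
  have ext2 : ∀ (a b : Fin (d+1)) (p q : ℕ) (m : Fin (d+1) →₀ ℕ),
      Finsupp.single a p + Finsupp.single b q ≤ m →
      p ≤ m a ∧ q ≤ m b ∧ (a = b → p + q ≤ m a) := by
    intro a b p q m h
    have ha := Finsupp.le_def.mp h a
    have hb := Finsupp.le_def.mp h b
    simp only [Finsupp.add_apply, Finsupp.single_apply, eq_self_iff_true, if_true] at ha hb
    refine ⟨?_, ?_, ?_⟩
    · split_ifs at ha <;> omega
    · split_ifs at hb <;> omega
    · intro hab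
      subst hab
      rw [if_pos rfl] at ha
      omega
  have ext3 : ∀ (a b c : Fin (d+1)) (m : Fin (d+1) →₀ ℕ),
      Finsupp.single a 1 + Finsupp.single b 1 + Finsupp.single c 1 ≤ m →
      1 ≤ m a ∧ 1 ≤ m b ∧ 1 ≤ m c := by
    intro a b c m h
    have ha := Finsupp.le_def.mp h a
    have hb := Finsupp.le_def.mp h b
    have hc := Finsupp.le_def.mp h c
    simp only [Finsupp.add_apply, Finsupp.single_apply, eq_self_iff_true, if_true] at ha hb hc
    refine ⟨?_, ?_, ?_⟩
    · split_ifs at ha <;> omega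
    · split_ifs at hb <;> omega
    · split_ifs at hc <;> omega
  have bld2 : ∀ (a b : Fin (d+1)) (p q : ℕ) (m : Fin (d+1) →₀ ℕ),
      p ≤ m a → q ≤ m b → (a = b → p + q ≤ m a) →
      Finsupp.single a p + Finsupp.single b q ≤ m := by
    intro a b p q m ha hb hab
    rw [Finsupp.le_def]
    intro x
    simp only [Finsupp.add_apply, Finsupp.single_apply]
    rcases eq_or_ne a x with h1 | h1 <;> rcases eq_or_ne b x with h2 | h2
    · rw [if_pos h1, if_pos h2]
      subst h1
      exact hab h2.symm
    · rw [if_pos h1, if_neg h2]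
      subst h1
      omega
    · rw [if_neg h1, if_pos h2]
      subst h2
      omega
    · rw [if_neg h1, if_neg h2]
      omega
  have bld3 : ∀ (a b c : Fin (d+1)) (m : Fin (d+1) →₀ ℕ),
      a ≠ b → a ≠ c → b ≠ c → 1 ≤ m a → 1 ≤ m b → 1 ≤ m c →
      Finsupp.single a 1 + Finsupp.single b 1 + Finsupp.single c 1 ≤ m := by
    intro a b c m hab hac hbc ha hb hc
    rw [Finsupp.le_def]
    intro x
    simp only [Finsupp.add_apply, Finsupp.single_apply]
    rcases eq_or_ne a x with h1 | h1 <;> rcases eq_or_ne b x with h2 | h2 <;>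
      rcases eq_or_ne c x with h3 | h3
    · exact absurd (h1.trans h2.symm) hab
    · exact absurd (h1.trans h2.symm) hab
    · exact absurd (h1.trans h3.symm) hac
    · rw [if_pos h1, if_neg h2, if_neg h3]; subst h1; omega
    · exact absurd (h2.trans h3.symm) hbc
    · rw [if_neg h1, if_pos h2, if_neg h3]; subst h2; omega
    · rw [if_neg h1, if_neg h2, if_pos h3]; subst h3; omega
    · rw [if_neg h1, if_neg h2, if_neg h3]; omega
  rw [hGA, hGB, hGC]
  ext p
  simp only [Ideal.mem_inf, mem_ideal_span_monomial_image]
  constructor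
  · intro h
    constructor <;> intro m hm <;> obtain ⟨s, hs, hsm⟩ := h m hm
    · -- membership in B
      rcases hs with (⟨i, j, h1, h2, h3, rfl⟩ | ⟨i, h1, h2, rfl⟩) | rfl
      · exact ⟨_, ⟨i, j, by omega, h2, h3, rfl⟩, hsm⟩
      · obtain ⟨ha, hb, hc⟩ := ext3 _ _ _ m hsm
        refine ⟨Finsupp.single (fn 1) 1 + Finsupp.single (fn i) 1,
          ⟨1, i, le_refl 1, by omega, h2, rfl⟩, bld2 _ _ _ _ _ ha hb ?_⟩
        intro hfe
        exact absurd (hfinj _ _ (by omega) (by omega) hfe) (by omega)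
      · obtain ⟨ha, hb, -⟩ := ext2 _ _ _ _ m hsm
        refine ⟨Finsupp.single (fn 1) 1 + Finsupp.single (fn 1) 1,
          ⟨1, 1, le_refl 1, le_refl 1, by omega, rfl⟩, ?_⟩
        rw [← Finsupp.single_add]
        exact Finsupp.single_le_iff.mpr ha
    · -- membership in C
      rcases hs with (⟨i, j, h1, h2, h3, rfl⟩ | ⟨i, h1, h2, rfl⟩) | rfl
      · exact ⟨_, ⟨i, j, h1, h2, by omega, rfl⟩, hsm⟩
      · obtain ⟨ha, hb, hc⟩ := ext3 _ _ _ m hsm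
        refine ⟨Finsupp.single (fn i) 1 + Finsupp.single (fn (d-1)) 1,
          ⟨i, d - 1, h1, by omega, le_refl _, rfl⟩, bld2 _ _ _ _ _ hb hc ?_⟩
        intro hfe
        exact absurd (hfinj _ _ (by omega) (by omega) hfe) (by omega)
      · obtain ⟨ha, hb, -⟩ := ext2 _ _ _ _ m hsm
        refine ⟨Finsupp.single (fn (d-1)) 1 + Finsupp.single (fn (d-1)) 1,
          ⟨d - 1, d - 1, by omega, le_refl _, le_refl _, rfl⟩, ?_⟩
        rw [← Finsupp.single_add]
        exact Finsupp.single_le_iff.mpr hb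
  · rintro ⟨hB, hC⟩ m hm
    obtain ⟨sB, ⟨i, j, h1i, hij, hj, rfl⟩, hle⟩ := hB m hm
    obtain ⟨sC, ⟨a, b, h2a, hab, hb, rfl⟩, hleC⟩ := hC m hm
    obtain ⟨hmi, hmj, hmij⟩ := ext2 _ _ _ _ m hle
    obtain ⟨hma, hmb, hmab⟩ := ext2 _ _ _ _ m hleC
    by_cases h2i : 2 ≤ i
    · exact ⟨_, Or.inl (Or.inl ⟨i, j, h2i, hij, hj, rfl⟩), hle⟩
    · -- i = 1
      have hi1 : i = 1 := by omega
      subst hi1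
      by_cases hbd : b ≤ d - 2
      · exact ⟨_, Or.inl (Or.inl ⟨a, b, h2a, hab, hbd, rfl⟩), hleC⟩
      · -- b = d - 1
        have hbd1 : b = d - 1 := by omega
        subst hbd1
        by_cases hj2 : 2 ≤ j
        · -- triple generator with j
          refine ⟨Finsupp.single (fn 1) 1 + Finsupp.single (fn j) 1
            + Finsupp.single (fn (d-1)) 1, Or.inl (Or.inr ⟨j, hj2, hj, rfl⟩),
            bld3 _ _ _ m ?_ ?_ ?_ hmi hmj hmb⟩
          · exact hfne _ _ (by omega) (by omega) (by omega)
          · exact hfne _ _ (by omega) (by omega) (by omega)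
          · exact hfne _ _ (by omega) (by omega) (by omega)
        · -- j = 1, so 2 ≤ m (fn 1)
          have hj1 : j = 1 := by omega
          subst hj1
          have hm1 : 2 ≤ m (fn 1) := hmij rfl
          by_cases had : a ≤ d - 2
          · -- triple generator with a
            refine ⟨Finsupp.single (fn 1) 1 + Finsupp.single (fn a) 1
              + Finsupp.single (fn (d-1)) 1, Or.inl (Or.inr ⟨a, h2a, had, rfl⟩),
              bld3 _ _ _ m ?_ ?_ ?_ hmi hma hmb⟩
            · exact hfne _ _ (by omega) (by omega) (by omega)
            · exact hfne _ _ (by omega) (by omega) (by omega)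
            · exact hfne _ _ (by omega) (by omega) (by omega)
          · -- a = d - 1, so 2 ≤ m (fn (d-1)) : last generator
            have had1 : a = d - 1 := by omega
            subst had1
            have hmd : 2 ≤ m (fn (d-1)) := hmab rfl
            refine ⟨Finsupp.single (fn 1) 2 + Finsupp.single (fn (d-1)) 2,
              Or.inr rfl, bld2 _ _ _ _ _ hm1 hmd ?_⟩
            intro hfe
            exact absurd (hfinj _ _ (by omega) (by omega) hfe) (by omega)
end

section
/- Consider the graded ring homomorphism mom_d: k[M_1,...,M_d] → k[A,X] sending M_i to (X + iA)X^{i-1}, where deg(M_i) = i and deg A = deg X = 1. For each n ≥ 2, the degree-n graded piece of the image of mom_d is an n-dimensional k-vector space with basis { X^n + nAX^{n-1} } ∪ { A^i X^{n-i} : 2 ≤ i ≤ n }. -/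
open MvPolynomial TrivSqZeroExt

noncomputable section

set_option linter.unusedSectionVars false
variable {k : Type*} [Field k] [CharZero k]

/-- the exponent finsupp for `A^a X^b` -/
def stmt6mu (a b : ℕ) : Fin 2 →₀ ℕ := Finsupp.single 0 a + Finsupp.single 1 b

lemma stmt6mu_apply0 (a b : ℕ) : stmt6mu a b 0 = a := by
  simp [stmt6mu, Finsupp.single_apply]

lemma stmt6mu_apply1 (a b : ℕ) : stmt6mu a b 1 = b := by
  simp [stmt6mu, Finsupp.single_apply]

lemma stmt6mu_eq (u : Fin 2 →₀ ℕ) : u = stmt6mu (u 0) (u 1) := by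
  ext i
  fin_cases i
  · simp [stmt6mu_apply0]
  · simp [stmt6mu_apply1]

lemma stmt6mu_inj {a b c d : ℕ} : stmt6mu a b = stmt6mu c d ↔ a = c ∧ b = d := by
  constructor
  · intro h
    constructor
    · have := congrArg (fun u => u 0) h; simpa [stmt6mu_apply0] using this
    · have := congrArg (fun u => u 1) h; simpa [stmt6mu_apply1] using this
  · rintro ⟨rfl, rfl⟩; rfl

lemma stmt6mu_degree (a b : ℕ) : (stmt6mu a b).degree = a + b := by
  rw [Finsupp.degree_apply]
  rw [Finset.sum_subset (Finset.subset_univ _)]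
  · rw [Fin.sum_univ_two, stmt6mu_apply0, stmt6mu_apply1]
  · intro x _ hx
    simpa using Finsupp.notMem_support_iff.mp hx

lemma stmt6_monomial_mu (a b : ℕ) (c : k) :
    (monomial (stmt6mu a b) c : MvPolynomial (Fin 2) k) = C c * X 0 ^ a * X 1 ^ b := by
  rw [X_pow_eq_monomial, X_pow_eq_monomial, C_apply, monomial_mul, monomial_mul,
    mul_one, mul_one, stmt6mu, zero_add]



def stmt6psi1 (k : Type*) [Field k] : MvPolynomial (Fin 2) k →ₐ[k] DualNumber (Polynomial k) :=
  aeval ![DualNumber.eps, TrivSqZeroExt.inl Polynomial.X]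

def stmt6psi2 (k : Type*) [Field k] : MvPolynomial (Fin 2) k →ₐ[k] DualNumber (Polynomial k) :=
  aeval ![0, TrivSqZeroExt.inl Polynomial.X + DualNumber.eps]

lemma stmt6_psi1_snd (q : MvPolynomial (Fin 2) k) (m : ℕ) :
    ((stmt6psi1 k q).snd).coeff m = coeff (stmt6mu 1 m) q := by
  induction q using MvPolynomial.induction_on' with
  | add p r hp hr => rw [map_add, snd_add, Polynomial.coeff_add, hp, hr, coeff_add]
  | monomial u c =>
    rw [show u = stmt6mu (u 0) (u 1) from stmt6mu_eq u]
    generalize u 0 = a; generalize u 1 = b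
    rw [coeff_monomial, stmt6_monomial_mu, map_mul, map_mul]
    rw [show stmt6psi1 k (C c) = algebraMap k (DualNumber (Polynomial k)) c by simp [stmt6psi1]]
    rw [map_pow, map_pow]
    rw [show stmt6psi1 k (X 0) = DualNumber.eps by simp [stmt6psi1]]
    rw [show stmt6psi1 k (X 1) = TrivSqZeroExt.inl Polynomial.X by simp [stmt6psi1]]
    match a with
    | 0 =>
      rw [pow_zero, mul_one, inl_pow, TrivSqZeroExt.algebraMap_eq_inl', inl_mul_inl, snd_inl]
      rw [if_neg (by rw [stmt6mu_inj]; omega)]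
      simp
    | 1 =>
      rw [inl_pow, pow_one, snd_mul, snd_mul,
        TrivSqZeroExt.algebraMap_eq_inl', fst_inl, snd_inl, fst_mul, fst_inl,
        DualNumber.fst_eps, DualNumber.snd_eps, MulOpposite.op_zero, zero_smul, add_zero,
        mul_zero, zero_smul, zero_add, op_smul_eq_smul, smul_smul, smul_eq_mul,
        mul_comm (Polynomial.X ^ b), Polynomial.algebraMap_eq, mul_one]
      rw [Polynomial.coeff_C_mul, Polynomial.coeff_X_pow]
      by_cases h : b = m
      · subst h; rw [if_pos rfl, mul_one, if_pos (by rw [stmt6mu_inj]; omega)]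
      · rw [if_neg (fun hh => h hh.symm), mul_zero, if_neg (by rw [stmt6mu_inj]; omega)]
    | (t+2) =>
      rw [show (DualNumber.eps : DualNumber (Polynomial k)) ^ (t+2) = 0 by
        rw [pow_add, pow_two, DualNumber.eps_mul_eps, mul_zero]]
      rw [mul_zero, zero_mul, snd_zero, Polynomial.coeff_zero,
        if_neg (by rw [stmt6mu_inj]; omega)]

lemma stmt6_psi2_snd (q : MvPolynomial (Fin 2) k) (m : ℕ) :
    ((stmt6psi2 k q).snd).coeff m = ((m : k) + 1) * coeff (stmt6mu 0 (m+1)) q := by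
  induction q using MvPolynomial.induction_on' with
  | add p r hp hr => rw [map_add, snd_add, Polynomial.coeff_add, hp, hr, coeff_add]; ring
  | monomial u c =>
    rw [show u = stmt6mu (u 0) (u 1) from stmt6mu_eq u]
    generalize u 0 = a; generalize u 1 = b
    rw [coeff_monomial, stmt6_monomial_mu, map_mul, map_mul]
    rw [show stmt6psi2 k (C c) = algebraMap k (DualNumber (Polynomial k)) c by simp [stmt6psi2]]
    rw [map_pow, map_pow]
    rw [show stmt6psi2 k (X 0) = 0 by simp [stmt6psi2]]
    rw [show stmt6psi2 k (X 1) = TrivSqZeroExt.inl Polynomial.X + DualNumber.eps by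
      simp [stmt6psi2]]
    match a with
    | (t+1) =>
      rw [zero_pow (by omega), mul_zero, zero_mul, snd_zero, Polynomial.coeff_zero,
        if_neg (by rw [stmt6mu_inj]; omega), mul_zero]
    | 0 =>
      rw [pow_zero, mul_one]
      match b with
      | 0 =>
        rw [pow_zero, mul_one, TrivSqZeroExt.algebraMap_eq_inl', snd_inl,
          Polynomial.coeff_zero, if_neg (by rw [stmt6mu_inj]; omega), mul_zero]
      | (s+1) =>
        rw [snd_mul, TrivSqZeroExt.algebraMap_eq_inl', fst_inl, snd_inl, smul_zero,
          add_zero, snd_pow]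
        simp only [fst_add, fst_inl, DualNumber.fst_eps, add_zero, snd_add, snd_inl,
          DualNumber.snd_eps, zero_add, Nat.pred_succ, smul_eq_mul, mul_one,
          Polynomial.algebraMap_eq]
        rw [Polynomial.coeff_C_mul, Polynomial.coeff_smul, Polynomial.coeff_X_pow,
          nsmul_eq_mul]
        by_cases h : s = m
        · subst h; rw [if_pos rfl, if_pos (by rw [stmt6mu_inj]; omega), mul_one]
          push_cast; ring
        · rw [if_neg (fun hh => h hh.symm), if_neg (by rw [stmt6mu_inj]; omega)]
          simp

end

lemma stmt6_dn {R : Type*} [CommRing R] (x : R) (i : ℕ) :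
    (TrivSqZeroExt.inl x + ((i + 1 : ℕ) : DualNumber R) * DualNumber.eps)
        * (TrivSqZeroExt.inl x) ^ i
      = (TrivSqZeroExt.inl x + DualNumber.eps) ^ (i + 1) := by
  apply TrivSqZeroExt.ext
  · simp [pow_succ]; ring
  · rw [snd_pow _ _]
    simp only [inl_pow, snd_mul, fst_add, fst_inl, DualNumber.fst_eps, add_zero, snd_add,
      snd_inl, DualNumber.snd_eps, zero_add, fst_mul, fst_natCast, fst_pow,
      Nat.pred_succ, smul_eq_mul, mul_one]
    simp only [snd_add, snd_inl, snd_mul, fst_natCast, DualNumber.snd_eps,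
      DualNumber.fst_eps, snd_natCast, smul_eq_mul, mul_one, mul_zero,
      op_smul_eq_smul, zero_add]
    push_cast
    ring

open TrivSqZeroExt in
/-- for `mom_d : k[M_1,…,M_d] → k[A,X]`, `M_i ↦ (X+iA)X^(i-1)`, the degree-`n`
homogeneous piece of the image is `n`-dimensional with basis
`{X^n + nAX^(n-1)} ∪ {A^i X^(n-i) : 2 ≤ i ≤ n}`, for every `n ≥ 2`.
The domain is realized as `MvPolynomial (Fin d) k`, the variable indexed by `i : Fin d`
playing the role of `M_{i+1}`. -/
theorem stmt6 (k : Type*) [Field k] [CharZero k] (d : ℕ) (hd : 3 ≤ d)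
    (A X : MvPolynomial (Fin 2) k) (hA : A = MvPolynomial.X 0) (hX : X = MvPolynomial.X 1)
    (mom : MvPolynomial (Fin d) k →ₐ[k] MvPolynomial (Fin 2) k)
    (hmom : ∀ i : Fin d,
      mom (MvPolynomial.X i) = (X + (((i : ℕ) + 1 : ℕ) : MvPolynomial (Fin 2) k) * A)
        * X ^ (i : ℕ))
    (n : ℕ) (hn : 2 ≤ n)
    (fam : Fin n → MvPolynomial (Fin 2) k)
    (hfam0 : fam ⟨0, by omega⟩ = X ^ n + (n : MvPolynomial (Fin 2) k) * A * X ^ (n - 1))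
    (hfam : ∀ j : Fin n, (j : ℕ) ≠ 0 → fam j = A ^ ((j : ℕ) + 1) * X ^ (n - ((j : ℕ) + 1))) :
    LinearIndependent k fam ∧
      Submodule.span k (Set.range fam)
        = Subalgebra.toSubmodule mom.range ⊓ homogeneousSubmodule (Fin 2) k n := by
  subst hA hX
  set S := mom.range with hS
  -- the equalizer identity on the range
  have key : ∀ p ∈ S, coeff (stmt6mu 1 (n-1)) p = (n : k) * coeff (stmt6mu 0 n) p := by
    have hcomp : (stmt6psi1 k).comp mom = (stmt6psi2 k).comp mom := by
      apply MvPolynomial.algHom_ext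
      intro i
      simp only [AlgHom.comp_apply, hmom i]
      rw [map_mul, map_pow, map_add, map_mul, map_natCast,
        map_mul, map_pow, map_add, map_mul, map_natCast]
      rw [show stmt6psi1 k (MvPolynomial.X 0) = DualNumber.eps by simp [stmt6psi1]]
      rw [show stmt6psi1 k (MvPolynomial.X 1) = TrivSqZeroExt.inl Polynomial.X by
        simp [stmt6psi1]]
      rw [show stmt6psi2 k (MvPolynomial.X 0) = 0 by simp [stmt6psi2]]
      rw [show stmt6psi2 k (MvPolynomial.X 1)
          = TrivSqZeroExt.inl Polynomial.X + DualNumber.eps by simp [stmt6psi2]]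
      rw [mul_zero, add_zero, stmt6_dn, ← pow_succ']
    intro p hp
    rw [hS, AlgHom.mem_range] at hp
    obtain ⟨q, rfl⟩ := hp
    have h := congrArg (fun z => (TrivSqZeroExt.snd z).coeff (n-1)) (DFunLike.congr_fun hcomp q)
    simp only [AlgHom.comp_apply] at h
    rw [stmt6_psi1_snd, stmt6_psi2_snd] at h
    rw [h, show n - 1 + 1 = n by omega, Nat.cast_sub (by omega), Nat.cast_one,
      sub_add_cancel]
  -- membership facts
  have hm1 : (MvPolynomial.X 1 + MvPolynomial.X 0 : MvPolynomial (Fin 2) k) ∈ S := by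
    rw [hS, AlgHom.mem_range]
    exact ⟨MvPolynomial.X ⟨0, by omega⟩, by rw [hmom]; push_cast; ring⟩
  have hm2 : ((MvPolynomial.X 1 + 2 * MvPolynomial.X 0) * MvPolynomial.X 1
      : MvPolynomial (Fin 2) k) ∈ S := by
    rw [hS, AlgHom.mem_range]
    exact ⟨MvPolynomial.X ⟨1, by omega⟩, by rw [hmom]; push_cast; ring⟩
  have hm3 : ((MvPolynomial.X 1 + 3 * MvPolynomial.X 0) * MvPolynomial.X 1 ^ 2
      : MvPolynomial (Fin 2) k) ∈ S := by
    rw [hS, AlgHom.mem_range]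
    exact ⟨MvPolynomial.X ⟨2, by omega⟩, by rw [hmom]; push_cast; ring⟩
  have hA2 : (MvPolynomial.X 0 ^ 2 : MvPolynomial (Fin 2) k) ∈ S := by
    have h : (MvPolynomial.X 0 ^ 2 : MvPolynomial (Fin 2) k)
        = (MvPolynomial.X 1 + MvPolynomial.X 0) * (MvPolynomial.X 1 + MvPolynomial.X 0)
          - (MvPolynomial.X 1 + 2 * MvPolynomial.X 0) * MvPolynomial.X 1 := by ring
    rw [h]; exact sub_mem (mul_mem hm1 hm1) hm2
  have hA2X : (MvPolynomial.X 0 ^ 2 * MvPolynomial.X 1 : MvPolynomial (Fin 2) k) ∈ S := by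
    have h : ((MvPolynomial.X 1 + MvPolynomial.X 0)
          * ((MvPolynomial.X 1 + 2 * MvPolynomial.X 0) * MvPolynomial.X 1)
          - (MvPolynomial.X 1 + 3 * MvPolynomial.X 0) * MvPolynomial.X 1 ^ 2
        : MvPolynomial (Fin 2) k)
        = C (2 : k) * (MvPolynomial.X 0 ^ 2 * MvPolynomial.X 1) := by
      rw [show C (2 : k) = (2 : MvPolynomial (Fin 2) k) from map_ofNat _ 2]; ring
    have h2 := S.smul_mem (sub_mem (mul_mem hm1 hm2) hm3) (2⁻¹ : k)
    rw [h, smul_eq_C_mul, ← mul_assoc, ← C_mul, inv_mul_cancel₀ (two_ne_zero), C_1,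
      one_mul] at h2
    exact h2
  have h23 : ∀ j : ℕ, (MvPolynomial.X 0 ^ 2 * MvPolynomial.X 1 ^ j
        : MvPolynomial (Fin 2) k) ∈ S
      ∧ (MvPolynomial.X 0 ^ 3 * MvPolynomial.X 1 ^ j : MvPolynomial (Fin 2) k) ∈ S := by
    intro j
    induction j with
    | zero =>
      constructor
      · simpa using hA2
      · have h : (MvPolynomial.X 0 ^ 3 * MvPolynomial.X 1 ^ 0 : MvPolynomial (Fin 2) k)
            = (MvPolynomial.X 1 + MvPolynomial.X 0) * MvPolynomial.X 0 ^ 2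
              - MvPolynomial.X 0 ^ 2 * MvPolynomial.X 1 := by ring
        rw [h]; exact sub_mem (mul_mem hm1 hA2) hA2X
    | succ j ih =>
      constructor
      · have h : (MvPolynomial.X 0 ^ 2 * MvPolynomial.X 1 ^ (j+1) : MvPolynomial (Fin 2) k)
            = (MvPolynomial.X 1 + MvPolynomial.X 0)
                * (MvPolynomial.X 0 ^ 2 * MvPolynomial.X 1 ^ j)
              - MvPolynomial.X 0 ^ 3 * MvPolynomial.X 1 ^ j := by ring
        rw [h]; exact sub_mem (mul_mem hm1 ih.1) ih.2
      · have h : (MvPolynomial.X 0 ^ 3 * MvPolynomial.X 1 ^ (j+1) : MvPolynomial (Fin 2) k)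
            = (MvPolynomial.X 1 + MvPolynomial.X 0)
                * (MvPolynomial.X 0 ^ 3 * MvPolynomial.X 1 ^ j)
              - MvPolynomial.X 0 ^ 2 * (MvPolynomial.X 0 ^ 2 * MvPolynomial.X 1 ^ j) := by
          ring
        rw [h]; exact sub_mem (mul_mem hm1 ih.2) (mul_mem hA2 ih.1)
  have hAij : ∀ i j : ℕ, (MvPolynomial.X 0 ^ (i+2) * MvPolynomial.X 1 ^ j
      : MvPolynomial (Fin 2) k) ∈ S := by
    intro i
    induction i using Nat.strong_induction_on with
    | _ i ih =>
      intro j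
      match i, ih with
      | 0, _ => exact (h23 j).1
      | 1, _ =>
        have h : (MvPolynomial.X 0 ^ (1+2) * MvPolynomial.X 1 ^ j : MvPolynomial (Fin 2) k)
            = MvPolynomial.X 0 ^ 3 * MvPolynomial.X 1 ^ j := by norm_num
        rw [h]; exact (h23 j).2
      | (t+2), ih =>
        have h : (MvPolynomial.X 0 ^ (t+2+2) * MvPolynomial.X 1 ^ j : MvPolynomial (Fin 2) k)
            = MvPolynomial.X 0 ^ 2 * (MvPolynomial.X 0 ^ (t+2) * MvPolynomial.X 1 ^ j) := by
          ring
        rw [h]; exact mul_mem hA2 (ih t (by omega) j)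
  -- monomial forms of the family
  have hfam0' : fam ⟨0, by omega⟩
      = monomial (stmt6mu 0 n) (1:k) + monomial (stmt6mu 1 (n-1)) (n:k) := by
    rw [hfam0, stmt6_monomial_mu, stmt6_monomial_mu]
    rw [map_one, map_natCast]
    ring
  have hfamj' : ∀ j : Fin n, (j : ℕ) ≠ 0 →
      fam j = monomial (stmt6mu ((j:ℕ)+1) (n-((j:ℕ)+1))) (1:k) := by
    intro j hj
    rw [hfam j hj, stmt6_monomial_mu, map_one, one_mul]
  -- all family members are in the range
  have hfam_mem : ∀ j : Fin n, fam j ∈ S := by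
    intro j
    by_cases hj : (j : ℕ) = 0
    · have hj' : j = ⟨0, by omega⟩ := Fin.ext hj
      obtain ⟨m, rfl⟩ : ∃ m, n = m + 2 := ⟨n - 2, by omega⟩
      rw [hj', hfam0]
      have hch : Nat.choose (m+2) (m+1) = m+2 := by
        simpa using Nat.choose_succ_self_right (m+1)
      have hexp : ((MvPolynomial.X 1 + MvPolynomial.X 0 : MvPolynomial (Fin 2) k)) ^ (m+2)
          = (∑ t ∈ Finset.range (m+1), MvPolynomial.X 1 ^ t * MvPolynomial.X 0 ^ (m+2-t)
              * (Nat.choose (m+2) t : MvPolynomial (Fin 2) k))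
            + ((m+2 : ℕ) : MvPolynomial (Fin 2) k) * MvPolynomial.X 0
              * MvPolynomial.X 1 ^ (m+1)
            + MvPolynomial.X 1 ^ (m+2) := by
        rw [add_pow, Finset.sum_range_succ, Finset.sum_range_succ, hch, Nat.choose_self,
          Nat.sub_self, show m+2 - (m+1) = 1 by omega]
        push_cast; ring
      have hsum : (∑ t ∈ Finset.range (m+1), MvPolynomial.X 1 ^ t
          * MvPolynomial.X 0 ^ (m+2-t)
          * (Nat.choose (m+2) t : MvPolynomial (Fin 2) k)) ∈ S := by
        apply sum_mem
        intro t ht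
        rw [Finset.mem_range] at ht
        rw [show m+2-t = (m-t)+2 by omega]
        have h : (MvPolynomial.X 1 ^ t * MvPolynomial.X 0 ^ ((m-t)+2)
            * (Nat.choose (m+2) t : MvPolynomial (Fin 2) k) : MvPolynomial (Fin 2) k)
            = (Nat.choose (m+2) t : MvPolynomial (Fin 2) k)
              * (MvPolynomial.X 0 ^ ((m-t)+2) * MvPolynomial.X 1 ^ t) := by ring
        rw [h]
        exact mul_mem (Subalgebra.natCast_mem S _) (hAij _ _)
      have h : (MvPolynomial.X 1 ^ (m+2) + ((m+2 : ℕ) : MvPolynomial (Fin 2) k)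
            * MvPolynomial.X 0 * MvPolynomial.X 1 ^ (m+2-1) : MvPolynomial (Fin 2) k)
          = (MvPolynomial.X 1 + MvPolynomial.X 0) ^ (m+2)
            - (∑ t ∈ Finset.range (m+1), MvPolynomial.X 1 ^ t
                * MvPolynomial.X 0 ^ (m+2-t)
                * (Nat.choose (m+2) t : MvPolynomial (Fin 2) k)) := by
        rw [hexp, show m+2-1 = m+1 from rfl]; ring
      rw [h]
      exact sub_mem (pow_mem hm1 _) hsum
    · rw [hfam j hj, show (j:ℕ) + 1 = ((j:ℕ) - 1) + 2 by omega]
      exact hAij _ _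
  -- all family members are homogeneous of degree n
  have hfam_hom : ∀ j : Fin n, fam j ∈ homogeneousSubmodule (Fin 2) k n := by
    intro j
    rw [mem_homogeneousSubmodule]
    by_cases hj : (j : ℕ) = 0
    · have hj' : j = ⟨0, by omega⟩ := Fin.ext hj
      rw [hj', hfam0']
      exact (isHomogeneous_monomial _ (by rw [stmt6mu_degree]; omega)).add
        (isHomogeneous_monomial _ (by rw [stmt6mu_degree]; omega))
    · rw [hfamj' j hj]
      exact isHomogeneous_monomial _ (by rw [stmt6mu_degree]; have := j.isLt; omega)
  -- coefficients of the family
  have hc : ∀ (a b : ℕ) (j : Fin n), coeff (stmt6mu a b) (fam j) =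
      if (j : ℕ) = 0 then
        ((if 0 = a ∧ n = b then (1:k) else 0) + (if 1 = a ∧ n - 1 = b then (n:k) else 0))
      else (if (j:ℕ)+1 = a ∧ n-((j:ℕ)+1) = b then (1:k) else 0) := by
    intro a b j
    by_cases hj : (j : ℕ) = 0
    · have hj' : j = ⟨0, by omega⟩ := Fin.ext hj
      rw [if_pos hj, hj', hfam0', coeff_add, coeff_monomial, coeff_monomial]
      simp only [stmt6mu_inj]
    · rw [if_neg hj, hfamj' j hj, coeff_monomial]
      simp only [stmt6mu_inj]
  -- linear independence
  have hli : LinearIndependent k fam := by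
    rw [Fintype.linearIndependent_iff]
    intro g hg i
    by_cases hi : (i : ℕ) = 0
    · have hzero : ∀ j ∈ (Finset.univ : Finset (Fin n)), j ≠ i →
          coeff (stmt6mu 0 n) (g j • fam j) = 0 := by
        intro j _ hji
        have hji' : (j : ℕ) ≠ (i : ℕ) := fun hh => hji (Fin.ext hh)
        rw [coeff_smul, hc]
        split_ifs <;> first | (exfalso; omega) | simp
      have h := congrArg (coeff (stmt6mu 0 n)) hg
      rw [coeff_sum, Finset.sum_eq_single_of_mem i (Finset.mem_univ i) hzero, coeff_zero,
        coeff_smul, hc, if_pos hi, if_pos ⟨rfl, rfl⟩, if_neg (by omega), add_zero] at h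
      simpa using h
    · have hzero : ∀ j ∈ (Finset.univ : Finset (Fin n)), j ≠ i →
          coeff (stmt6mu ((i:ℕ)+1) (n-((i:ℕ)+1))) (g j • fam j) = 0 := by
        intro j _ hji
        have hji' : (j : ℕ) ≠ (i : ℕ) := fun hh => hji (Fin.ext hh)
        rw [coeff_smul, hc]
        split_ifs <;> first | (exfalso; omega) | simp
      have h := congrArg (coeff (stmt6mu ((i:ℕ)+1) (n-((i:ℕ)+1)))) hg
      rw [coeff_sum, Finset.sum_eq_single_of_mem i (Finset.mem_univ i) hzero, coeff_zero,
        coeff_smul, hc, if_neg hi, if_pos ⟨rfl, rfl⟩] at h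
      simpa using h
  refine ⟨hli, le_antisymm ?_ ?_⟩
  · rw [Submodule.span_le]
    rintro _ ⟨j, rfl⟩
    exact Submodule.mem_inf.mpr ⟨hfam_mem j, hfam_hom j⟩
  · rintro p hp
    rw [Submodule.mem_inf] at hp
    obtain ⟨hp1, hp2⟩ := hp
    rw [Subalgebra.mem_toSubmodule] at hp1
    rw [mem_homogeneousSubmodule] at hp2
    have hrep : p = ∑ j : Fin n,
        (if (j:ℕ) = 0 then coeff (stmt6mu 0 n) p
          else coeff (stmt6mu ((j:ℕ)+1) (n-((j:ℕ)+1))) p) • fam j := by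
      apply MvPolynomial.ext
      intro u
      rw [stmt6mu_eq u]
      generalize u 0 = a
      generalize u 1 = b
      rw [coeff_sum]
      by_cases hab : a + b = n
      · rcases (show a = 0 ∨ a = 1 ∨ 2 ≤ a by omega) with rfl | rfl | ha2
        · have hb : b = n := by omega
          rw [hb]
          have hzero : ∀ j ∈ (Finset.univ : Finset (Fin n)), j ≠ (⟨0, by omega⟩ : Fin n) →
              coeff (stmt6mu 0 n) ((if (j:ℕ) = 0 then coeff (stmt6mu 0 n) p
                else coeff (stmt6mu ((j:ℕ)+1) (n-((j:ℕ)+1))) p) • fam j) = 0 := by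
            intro j _ hji
            have hji' : (j : ℕ) ≠ 0 := fun hh => hji (Fin.ext hh)
            rw [coeff_smul, hc]
            split_ifs <;> first | (exfalso; omega) | simp
          rw [Finset.sum_eq_single_of_mem (⟨0, by omega⟩ : Fin n) (Finset.mem_univ _) hzero]
          rw [coeff_smul, hc, if_pos rfl, if_pos rfl, if_pos ⟨rfl, rfl⟩,
            if_neg (by omega), add_zero]
          simp
        · have hb : b = n - 1 := by omega
          rw [hb]
          have hzero : ∀ j ∈ (Finset.univ : Finset (Fin n)), j ≠ (⟨0, by omega⟩ : Fin n) →
              coeff (stmt6mu 1 (n-1)) ((if (j:ℕ) = 0 then coeff (stmt6mu 0 n) p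
                else coeff (stmt6mu ((j:ℕ)+1) (n-((j:ℕ)+1))) p) • fam j) = 0 := by
            intro j _ hji
            have hji' : (j : ℕ) ≠ 0 := fun hh => hji (Fin.ext hh)
            rw [coeff_smul, hc]
            split_ifs <;> first | (exfalso; omega) | simp
          rw [Finset.sum_eq_single_of_mem (⟨0, by omega⟩ : Fin n) (Finset.mem_univ _) hzero]
          rw [coeff_smul, hc, if_pos rfl, if_pos rfl, if_neg (by omega),
            if_pos ⟨rfl, rfl⟩, zero_add, key p hp1]
          simp [mul_comm]
        · obtain ⟨t, rfl⟩ : ∃ t, a = t + 2 := ⟨a - 2, by omega⟩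
          have hb : b = n - (t + 2) := by omega
          have htn : t + 1 < n := by omega
          rw [hb]
          have hzero : ∀ j ∈ (Finset.univ : Finset (Fin n)), j ≠ (⟨t+1, htn⟩ : Fin n) →
              coeff (stmt6mu (t+2) (n-(t+2)))
                ((if (j:ℕ) = 0 then coeff (stmt6mu 0 n) p
                  else coeff (stmt6mu ((j:ℕ)+1) (n-((j:ℕ)+1))) p) • fam j) = 0 := by
            intro j _ hji
            have hji' : (j : ℕ) ≠ t + 1 := fun hh => hji (Fin.ext hh)
            rw [coeff_smul, hc]
            split_ifs <;> first | (exfalso; omega) | simp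
          rw [Finset.sum_eq_single_of_mem (⟨t+1, htn⟩ : Fin n) (Finset.mem_univ _) hzero]
          rw [coeff_smul, hc, if_neg (by simp), if_neg (by simp), if_pos ⟨rfl, rfl⟩]
          simp
      · rw [hp2.coeff_eq_zero (by rw [stmt6mu_degree]; omega)]
        symm
        apply Finset.sum_eq_zero
        intro j _
        have hjlt := j.isLt
        rw [coeff_smul, hc]
        split_ifs <;> first | (exfalso; omega) | simp
    rw [hrep]
    exact Submodule.sum_mem _ fun j _ =>
      Submodule.smul_mem _ _ (Submodule.subset_span ⟨j, rfl⟩)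
end

section
/- The following power series identity holds: 1/(1-t^d) · [ (1+t+...+t^{d-2})/(1-t^{d-1}) + (1 + t^2 + t^3 + ... + t^{d-1})/(1-t) − (1+t+...+t^d) ] = (1 − t + t^2)/(1−t)^2, for every integer d ≥ 2. -/
open PowerSeries Finset

/-- the power series identity
`1/(1−t^d) · [ (1+⋯+t^(d-2))/(1−t^(d-1)) + (1+t^2+⋯+t^(d-1))/(1−t) − (1+⋯+t^d) ]
 = (1−t+t^2)/(1−t)^2` over `ℚ`, for every `d ≥ 2`. -/
theorem stmt8 (d : ℕ) (hd : 2 ≤ d) :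
    (1 - (PowerSeries.X : PowerSeries ℚ) ^ d)⁻¹ *
      ((∑ i ∈ Finset.range (d - 1), (PowerSeries.X : PowerSeries ℚ) ^ i)
          * (1 - (PowerSeries.X : PowerSeries ℚ) ^ (d - 1))⁻¹
        + (1 + ∑ i ∈ Finset.Icc 2 (d - 1), (PowerSeries.X : PowerSeries ℚ) ^ i)
          * (1 - (PowerSeries.X : PowerSeries ℚ))⁻¹
        - ∑ i ∈ Finset.range (d + 1), (PowerSeries.X : PowerSeries ℚ) ^ i)
      = (1 - (PowerSeries.X : PowerSeries ℚ) + (PowerSeries.X : PowerSeries ℚ) ^ 2)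
        * ((1 - (PowerSeries.X : PowerSeries ℚ)) ^ 2)⁻¹ := by
  set Xq : PowerSeries ℚ := PowerSeries.X with hXq
  have hcc : ∀ k : ℕ, 1 ≤ k → constantCoeff (1 - Xq ^ k) = 1 := by
    intro k hk
    simp [hXq, zero_pow (by omega : k ≠ 0)]
  have hne : ∀ k : ℕ, 1 ≤ k → (1 - Xq ^ k) ≠ 0 := by
    intro k hk h
    have := hcc k hk
    rw [h] at this
    simp at this
  have hA : (1 - Xq ^ d) * (1 - Xq ^ d)⁻¹ = 1 :=
    PowerSeries.mul_inv_cancel _ (by rw [hcc d (by omega)]; norm_num)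
  have hB : (1 - Xq ^ (d-1)) * (1 - Xq ^ (d-1))⁻¹ = 1 :=
    PowerSeries.mul_inv_cancel _ (by rw [hcc (d-1) (by omega)]; norm_num)
  have hC : (1 - Xq) * (1 - Xq)⁻¹ = 1 := by
    have := hA
    have h1 : (1 - Xq ^ 1) * (1 - Xq ^ 1)⁻¹ = 1 :=
      PowerSeries.mul_inv_cancel _ (by rw [hcc 1 le_rfl]; norm_num)
    simpa using h1
  have hC2 : ((1 - Xq) ^ 2) * ((1 - Xq) ^ 2)⁻¹ = 1 :=
    PowerSeries.mul_inv_cancel _ (by simp [hXq])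
  have hgeom : ∀ n : ℕ, (∑ i ∈ Finset.range n, Xq ^ i) * (1 - Xq) = 1 - Xq ^ n := by
    intro n
    have := geom_sum_mul Xq n
    linear_combination -this
  have hS1 := hgeom (d - 1)
  have hS3 := hgeom (d + 1)
  have hsum : (1 : PowerSeries ℚ) + ∑ i ∈ Finset.Icc 2 (d - 1), Xq ^ i
      = (∑ i ∈ Finset.range d, Xq ^ i) - Xq := by
    have h1 : Finset.Icc 2 (d - 1) = Finset.Ico 2 d := by
      rw [← Finset.Ico_add_one_right_eq_Icc]
      congr 1
      omega
    have h2 : (∑ i ∈ Finset.range d, Xq ^ i)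
        = (∑ i ∈ Finset.Ico 0 2, Xq ^ i) + ∑ i ∈ Finset.Ico 2 d, Xq ^ i := by
      rw [Finset.range_eq_Ico,
        ← Finset.sum_Ico_consecutive (fun i => Xq ^ i) (by omega : 0 ≤ 2) (by omega : 2 ≤ d)]
    rw [h1, h2]
    have : (∑ i ∈ Finset.Ico 0 2, Xq ^ i) = 1 + Xq := by
      have h : Finset.Ico 0 2 = Finset.range 2 := by rw [Finset.range_eq_Ico]
      rw [h]
      simp [Finset.sum_range_succ]
    rw [this]; ring
  have hS2 : ((1 : PowerSeries ℚ) + ∑ i ∈ Finset.Icc 2 (d - 1), Xq ^ i) * (1 - Xq)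
      = 1 - Xq + Xq ^ 2 - Xq ^ d := by
    rw [hsum, sub_mul, hgeom d]; ring
  have hM : (1 - Xq ^ d) * ((1 - Xq ^ (d-1)) * (1 - Xq) ^ 2) ≠ 0 := by
    apply mul_ne_zero (hne d (by omega))
    apply mul_ne_zero (hne (d-1) (by omega))
    apply pow_ne_zero
    simpa using hne 1 le_rfl
  apply mul_left_cancel₀ hM
  set A := (1 - Xq ^ d) with hAdef
  set B := (1 - Xq ^ (d-1)) with hBdef
  set C := (1 - Xq) with hCdef
  set S1 := (∑ i ∈ Finset.range (d - 1), Xq ^ i) with hS1def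
  set S2 := ((1 : PowerSeries ℚ) + ∑ i ∈ Finset.Icc 2 (d - 1), Xq ^ i) with hS2def
  set S3 := (∑ i ∈ Finset.range (d + 1), Xq ^ i) with hS3def
  set a := A⁻¹
  set b := B⁻¹
  set c := C⁻¹
  set c2 := (C ^ 2)⁻¹
  linear_combination (B * C^2 * (S1 * b + S2 * c - S3)) * hA + (C^2 * S1) * hB
    + (B * C * S2) * hC - (A * B * (1 - Xq + Xq^2)) * hC2 + C * hS1 + B * hS2
    - (B * C) * hS3
end

section
/- Each generator (j−i+3)M_{i−2}M_{i−1}M_{j+1}M_{j+2} − 2(j−i+2)M_{i−2}M_i M_j M_{j+2} + (j−i+1)M_{i−1}M_i M_j M_{j+1} (with M_0 = 1, for 2 ≤ i ≤ j ≤ d−2) vanishes when each M_k is substituted by the Pareto moment m_k = α ξ^k/(α − k), for α not in {0, 1, ..., d} and ξ ≠ 0. -/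
set_option maxHeartbeats 1000000

lemma stmt15_key (K : Type*) [Field K] (x y : K)
    (hx0 : x ≠ 0) (hx1 : x + 1 ≠ 0) (hx2 : x + 2 ≠ 0)
    (hy0 : y ≠ 0) (hy1 : y - 1 ≠ 0) (hy2 : y - 2 ≠ 0) :
    (x - y + 3) / (x + 2) / (x + 1) / (y - 1) / (y - 2)
      - 2 * (x - y + 2) / (x + 2) / x / y / (y - 2)
      + (x - y + 1) / (x + 1) / x / y / (y - 1) = 0 := by
  simp only [div_div]
  rw [div_sub_div _ _ (by simp [hx1, hx2, hy1, hy2, mul_ne_zero]) (by simp [hx0, hx2, hy0, hy2, mul_ne_zero]),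
    div_add_div _ _ (by simp [hx0, hx1, hx2, hy0, hy1, hy2, mul_ne_zero]) (by simp [hx0, hx1, hy0, hy1, mul_ne_zero]),
    div_eq_zero_iff]
  left
  ring

/-- each generator of the Pareto ideal
`(j−i+3)M_{i−2}M_{i−1}M_{j+1}M_{j+2} − 2(j−i+2)M_{i−2}M_iM_jM_{j+2} + (j−i+1)M_{i−1}M_iM_jM_{j+1}`
(for `2 ≤ i ≤ j ≤ d−2`) vanishes at the Pareto moments `m_k = (α/(α−k))·ξ^k`. -/
theorem stmt15 (K : Type*) [Field K] [CharZero K] (d : ℕ) (hd : 6 ≤ d)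
    (α ξ : K) (hα : ∀ n : ℕ, n ≤ d → α ≠ (n : K)) (hξ : ξ ≠ 0)
    (m : ℕ → K) (hm : ∀ n : ℕ, m n = α / (α - (n : K)) * ξ ^ n)
    (i j : ℕ) (hi : 2 ≤ i) (hij : i ≤ j) (hj : j ≤ d - 2) :
    ((j - i + 3 : ℕ) : K) * (m (i - 2) * m (i - 1) * m (j + 1) * m (j + 2))
      - 2 * ((j - i + 2 : ℕ) : K) * (m (i - 2) * m i * m j * m (j + 2))
      + ((j - i + 1 : ℕ) : K) * (m (i - 1) * m i * m j * m (j + 1)) = 0 := by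
  obtain ⟨a, rfl⟩ : ∃ a, i = a + 2 := ⟨i - 2, by omega⟩
  obtain ⟨p, rfl⟩ : ∃ p, j = (a + 2) + p := ⟨j - (a + 2), by omega⟩
  have hne : ∀ k : ℕ, k ≤ d → α - (k : K) ≠ 0 := fun k hk =>
    sub_ne_zero.mpr (hα k hk)
  have h0 := hne a (by omega)
  have h1 := hne (a + 1) (by omega)
  have h2 := hne (a + 2) (by omega)
  have h3 := hne (a + 2 + p) (by omega)
  have h4 := hne (a + 2 + p + 1) (by omega)
  have h5 := hne (a + 2 + p + 2) (by omega)
  push_cast at h0 h1 h2 h3 h4 h5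
  have e1 : a + 2 - 2 = a := by omega
  have e2 : a + 2 - 1 = a + 1 := by omega
  have e3 : a + 2 + p - (a + 2) = p := by omega
  have hkey := stmt15_key K (α - ((a : K) + 2)) (α - ((a : K) + 2 + (p : K)))
    h2 (fun h => h1 (by linear_combination h))
    (fun h => h0 (by linear_combination h))
    h3 (fun h => h4 (by linear_combination h))
    (fun h => h5 (by linear_combination h))
  simp only [hm, e1, e2, e3]
  push_cast
  linear_combination (α ^ 4 * ξ ^ (4 * a + 2 * p + 8)) * hkey
end

section
/- Suppose m_i = ∑_{j=1}^r ∑_{k=0}^{l} λ_{jk} · (i!/(i−k)!) · ξ_j^{i−k} for all i ∈ ℕ, with distinct points ξ_j. Let p(X) = ∏_{j=1}^r (X − ξ_j). Then for every polynomial q ∈ k[X] and every a ∈ ℕ, the linear functional σ(X^i) = m_i satisfies σ(X^a · q · p^{l+1}) = 0; in particular, writing p^{l+1} = ∑_{n=0}^{(l+1)r} c_n X^n, one has ∑_{n=0}^{(l+1)r} c_n m_{a+n} = 0 for every a ∈ ℕ. -/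
open Polynomial Finset

lemma iterDeriv_add' {K : Type*} [CommRing K] (k : ℕ) (p q : Polynomial K) :
    derivative^[k] (p + q) = derivative^[k] p + derivative^[k] q := by
  induction k generalizing p q with
  | zero => simp
  | succ k ih => simp [Function.iterate_succ_apply, derivative_add, ih]

lemma eval_iterDeriv_zero {K : Type*} [CommRing K] (f : Polynomial K) (c : K)
    (k l : ℕ) (hk : k ≤ l) (hdvd : (X - C c) ^ (l + 1) ∣ f) :
    (derivative^[k] f).eval c = 0 := by
  have h1 : (X - C c) ^ (l + 1 - k) ∣ derivative^[k] f :=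
    pow_sub_dvd_iterate_derivative_of_pow_dvd k hdvd
  have h2 : (X - C c) ∣ derivative^[k] f := by
    refine dvd_trans ?_ h1
    exact dvd_pow_self _ (by omega)
  rw [← IsRoot.def, ← dvd_iff_isRoot]
  exact h2

/-- if `m_i = ∑_j ∑_{k≤l} λ_{jk}·(i!/(i−k)!)·ξ_j^{i−k}` with distinct `ξ_j`,
and `p = ∏_j (X − ξ_j)`, then the functional `σ(X^i) = m_i` kills `X^a·q·p^{l+1}` for every
polynomial `q` and every `a`; in particular `∑_n c_n m_{a+n} = 0` where `p^{l+1} = ∑ c_n X^n`. -/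
theorem stmt17 (K : Type*) [Field K] [CharZero K]
    (r l : ℕ) (hr : 1 ≤ r)
    (ξ : Fin r → K) (hξ : Function.Injective ξ)
    (lam : Fin r → ℕ → K)
    (m : ℕ → K)
    (hm : ∀ i : ℕ, m i = ∑ j : Fin r, ∑ k ∈ Finset.range (l + 1),
      lam j k * (i.descFactorial k : K) * ξ j ^ (i - k))
    (σ : Polynomial K → K)
    (hσ : ∀ q : Polynomial K, σ q = ∑ n ∈ q.support, q.coeff n * m n)
    (p : Polynomial K) (hp : p = ∏ j : Fin r, (X - C (ξ j))) :
    (∀ (q : Polynomial K) (a : ℕ), σ (X ^ a * q * p ^ (l + 1)) = 0) ∧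
      (∀ a : ℕ, ∑ n ∈ Finset.range ((l + 1) * r + 1),
        (p ^ (l + 1)).coeff n * m (a + n) = 0) := by
  -- σ as a sum of evaluations of iterated derivatives
  have hsum : ∀ q : Polynomial K, q.sum (fun n c => c * m n) =
      ∑ j : Fin r, ∑ k ∈ Finset.range (l + 1),
        lam j k * (derivative^[k] q).eval (ξ j) := by
    intro q
    induction q using Polynomial.induction_on' with
    | add f g hf hg =>
      rw [Polynomial.sum_add_index f g (fun n c => c * m n) (fun n => zero_mul (m n))
        (fun n a b => add_mul a b (m n)), hf, hg, ← Finset.sum_add_distrib]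
      refine Finset.sum_congr rfl fun j _ => ?_
      rw [← Finset.sum_add_distrib]
      refine Finset.sum_congr rfl fun k _ => ?_
      rw [iterDeriv_add', eval_add, mul_add]
    | monomial n a =>
      rw [Polynomial.sum_monomial_index a _ (zero_mul _), hm n, Finset.mul_sum]
      refine Finset.sum_congr rfl fun j _ => ?_
      rw [Finset.mul_sum]
      refine Finset.sum_congr rfl fun k _ => ?_
      rw [← C_mul_X_pow_eq_monomial, iterate_derivative_C_mul,
        iterate_derivative_X_pow_eq_natCast_mul]
      simp [eval_mul, eval_pow]
      ring
  have hsig : ∀ q : Polynomial K, σ q =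
      ∑ j : Fin r, ∑ k ∈ Finset.range (l + 1),
        lam j k * (derivative^[k] q).eval (ξ j) := by
    intro q
    rw [hσ q, ← hsum q]
    rfl
  have hdvd : ∀ j : Fin r, (X - C (ξ j)) ∣ p := by
    intro j
    rw [hp]
    exact Finset.dvd_prod_of_mem _ (Finset.mem_univ j)
  have part1 : ∀ (q : Polynomial K) (a : ℕ), σ (X ^ a * q * p ^ (l + 1)) = 0 := by
    intro q a
    rw [hsig]
    refine Finset.sum_eq_zero fun j _ => Finset.sum_eq_zero fun k hk => ?_
    rw [eval_iterDeriv_zero _ _ k l (by simpa using Finset.mem_range_succ_iff.mp hk)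
      (Dvd.dvd.mul_left (pow_dvd_pow_of_dvd (hdvd j) (l + 1)) _), mul_zero]
  refine ⟨part1, fun a => ?_⟩
  set g : Polynomial K := p ^ (l + 1) with hg
  set N : ℕ := (l + 1) * r with hN
  have hdegp : p.natDegree ≤ r := by
    rw [hp]
    refine le_trans (Polynomial.natDegree_prod_le _ _) ?_
    simp [natDegree_X_sub_C]
  have hdegg : g.natDegree ≤ N := by
    refine le_trans (Polynomial.natDegree_pow_le) ?_
    exact Nat.mul_le_mul_left _ hdegp
  have hdegf : (X ^ a * g).natDegree ≤ a + N := by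
    refine le_trans (Polynomial.natDegree_mul_le) ?_
    simpa [natDegree_X_pow] using hdegg
  have h0 : σ (X ^ a * g) = 0 := by
    have := part1 1 a
    simpa using this
  have hcoeff_lt : ∀ n < a, (X ^ a * g).coeff n = 0 := by
    intro n hn
    rw [coeff_X_pow_mul', if_neg (by omega)]
  have hexpand : σ (X ^ a * g) =
      ∑ n ∈ Finset.range (a + N + 1), (X ^ a * g).coeff n * m n := by
    rw [hσ]
    have : (∑ n ∈ (X ^ a * g).support, (X ^ a * g).coeff n * m n) =
        (X ^ a * g).sum (fun n c => c * m n) := rfl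
    rw [this, Polynomial.sum_over_range' (X ^ a * g) (fun n => zero_mul (m n)) (a + N + 1) (by omega)]
  have hsplit : ∑ n ∈ Finset.range (a + N + 1), (X ^ a * g).coeff n * m n =
      ∑ n ∈ Finset.Ico a (a + N + 1), (X ^ a * g).coeff n * m n := by
    rw [Finset.range_eq_Ico, ← Finset.sum_Ico_consecutive _ (Nat.zero_le a) (by omega)]
    have hz : ∑ i ∈ Finset.Ico 0 a, (X ^ a * g).coeff i * m i = 0 := by
      refine Finset.sum_eq_zero fun n hn => ?_
      rw [hcoeff_lt n (Finset.mem_Ico.mp hn).2, zero_mul]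
    rw [hz, zero_add]
  have hshift : ∑ n ∈ Finset.Ico a (a + N + 1), (X ^ a * g).coeff n * m n =
      ∑ n ∈ Finset.range (N + 1), g.coeff n * m (a + n) := by
    have : a + N + 1 = a + (N + 1) := by omega
    rw [this, Finset.sum_Ico_eq_sum_range]
    simp only [Nat.add_sub_cancel_left]
    refine Finset.sum_congr rfl fun n _ => ?_
    congr 1
    rw [add_comm a n, coeff_X_pow_mul]
  rw [← hshift, ← hsplit, ← hexpand, h0]
end
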